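/- There exists a constant c > 0 such that for every prime ℓ ≥ 5 and every d ∈ 𝔽_ℓ^× the following hold, where s := |SL₂(𝔽_ℓ)| = ℓ(ℓ−1)(ℓ+1): (1) |#{A ∈ GL₂(𝔽_ℓ) : det(A) = d and A ∈ C₁(ℓ)} − s/2| ≤ c·s/ℓ; (2) |#{A ∈ GL₂(𝔽_ℓ) : det(A) = d and A ∈ C₂(ℓ)} − s/2| ≤ c·s/ℓ; (3) |#{A ∈ GL₂(𝔽_ℓ) : det(A) = d and A ∈ C₃(ℓ)} − s| ≤ c·s/ℓ. -/

import Mathlib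

/-- `C₁(ℓ)`: matrices `A ∈ GL₂(𝔽_ℓ)` with `tr(A)² − 4 det(A)` a nonzero square and
`tr(A) ≠ 0`. -/
def serreC1 (ℓ : ℕ) : Set (Matrix.GeneralLinearGroup (Fin 2) (ZMod ℓ)) :=
  {A | (∃ y : ZMod ℓ, y ≠ 0 ∧
      Matrix.trace (A : Matrix (Fin 2) (Fin 2) (ZMod ℓ)) ^ 2 -
        4 * Matrix.det (A : Matrix (Fin 2) (Fin 2) (ZMod ℓ)) = y ^ 2) ∧
    Matrix.trace (A : Matrix (Fin 2) (Fin 2) (ZMod ℓ)) ≠ 0}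

/-- `C₂(ℓ)`: matrices `A ∈ GL₂(𝔽_ℓ)` with `tr(A)² − 4 det(A)` not a square and
`tr(A) ≠ 0`. -/
def serreC2 (ℓ : ℕ) : Set (Matrix.GeneralLinearGroup (Fin 2) (ZMod ℓ)) :=
  {A | (¬ ∃ y : ZMod ℓ,
      Matrix.trace (A : Matrix (Fin 2) (Fin 2) (ZMod ℓ)) ^ 2 -
        4 * Matrix.det (A : Matrix (Fin 2) (Fin 2) (ZMod ℓ)) = y ^ 2) ∧
    Matrix.trace (A : Matrix (Fin 2) (Fin 2) (ZMod ℓ)) ≠ 0}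

/-- `C₃(ℓ)`: matrices `A ∈ GL₂(𝔽_ℓ)` such that `u := tr(A)²/det(A)` avoids
`0, 1, 2, 4` and `u² − 3u + 1 ≠ 0`. -/
def serreC3 (ℓ : ℕ) : Set (Matrix.GeneralLinearGroup (Fin 2) (ZMod ℓ)) :=
  {A | Matrix.trace (A : Matrix (Fin 2) (Fin 2) (ZMod ℓ)) ^ 2 *
        (Matrix.det (A : Matrix (Fin 2) (Fin 2) (ZMod ℓ)))⁻¹ ≠ 0 ∧
    Matrix.trace (A : Matrix (Fin 2) (Fin 2) (ZMod ℓ)) ^ 2 *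
        (Matrix.det (A : Matrix (Fin 2) (Fin 2) (ZMod ℓ)))⁻¹ ≠ 1 ∧
    Matrix.trace (A : Matrix (Fin 2) (Fin 2) (ZMod ℓ)) ^ 2 *
        (Matrix.det (A : Matrix (Fin 2) (Fin 2) (ZMod ℓ)))⁻¹ ≠ 2 ∧
    Matrix.trace (A : Matrix (Fin 2) (Fin 2) (ZMod ℓ)) ^ 2 *
        (Matrix.det (A : Matrix (Fin 2) (Fin 2) (ZMod ℓ)))⁻¹ ≠ 4 ∧
    (Matrix.trace (A : Matrix (Fin 2) (Fin 2) (ZMod ℓ)) ^ 2 *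
        (Matrix.det (A : Matrix (Fin 2) (Fin 2) (ZMod ℓ)))⁻¹) ^ 2 -
      3 * (Matrix.trace (A : Matrix (Fin 2) (Fin 2) (ZMod ℓ)) ^ 2 *
        (Matrix.det (A : Matrix (Fin 2) (Fin 2) (ZMod ℓ)))⁻¹) + 1 ≠ 0}


open Finset Matrix

section SerreCounting
variable {F : Type*} [Field F] [Fintype F] [DecidableEq F]


/-- A quadratic equation has at most two roots. -/
lemma quad_card (b c : F) :
    (univ.filter fun a : F => a * a + b * a + c = 0).card ≤ 2 := by
  by_contra h
  push_neg at h
  obtain ⟨x, y, z, hx, hy, hz, hxy, hxz, hyz⟩ := Finset.two_lt_card_iff.mp h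
  simp only [mem_filter, mem_univ, true_and] at hx hy hz
  have h1 : (x - y) * (x + y + b) = 0 := by linear_combination hx - hy
  have h2 : (x - z) * (x + z + b) = 0 := by linear_combination hx - hz
  have e1 : x + y + b = 0 := by
    rcases mul_eq_zero.mp h1 with h | h
    · exact absurd (sub_eq_zero.mp h) hxy
    · exact h
  have e2 : x + z + b = 0 := by
    rcases mul_eq_zero.mp h2 with h | h
    · exact absurd (sub_eq_zero.mp h) hxz
    · exact h
  exact hyz (by linear_combination e1 - e2)

/-- Number of pairs with given nonzero product. -/
lemma pair_card {m : F} (hm : m ≠ 0) :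
    (univ.filter fun p : F × F => p.1 * p.2 = m).card = Fintype.card F - 1 := by
  have : (univ.filter fun p : F × F => p.1 * p.2 = m).card = (univ.erase (0:F)).card := by
    apply Finset.card_bij' (fun p _ => p.1) (fun b _ => (b, b⁻¹ * m))
    · intro p hp
      simp only [mem_filter, mem_univ, true_and] at hp
      simp only [mem_erase, mem_univ, and_true]
      intro h0; rw [h0, zero_mul] at hp; exact hm hp.symm
    · intro b hb
      simp only [mem_erase, mem_univ, and_true] at hb
      simp only [mem_filter, mem_univ, true_and]
      field_simp
    · intro p hp
      simp only [mem_filter, mem_univ, true_and] at hp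
      have h1 : p.1 ≠ 0 := by intro h0; rw [h0, zero_mul] at hp; exact hm hp.symm
      have : p.2 = p.1⁻¹ * m := by field_simp; linear_combination hp
      exact Prod.ext rfl this.symm
    · intro b hb; rfl
  rw [this, Finset.card_erase_of_mem (mem_univ _), Finset.card_univ]

lemma pair_card_le (m : F) :
    (univ.filter fun p : F × F => p.1 * p.2 = m).card ≤ 2 * Fintype.card F := by
  by_cases hm : m = 0
  · subst hm
    have hsub : (univ.filter fun p : F × F => p.1 * p.2 = 0) ⊆
        (univ.filter fun p : F × F => p.1 = 0) ∪ (univ.filter fun p : F × F => p.2 = 0) := by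
      intro p hp
      simp only [mem_filter, mem_univ, true_and] at hp
      simp only [mem_union, mem_filter, mem_univ, true_and]
      exact mul_eq_zero.mp hp
    calc (univ.filter fun p : F × F => p.1 * p.2 = 0).card ≤ _ := Finset.card_le_card hsub
      _ ≤ (univ.filter fun p : F × F => p.1 = 0).card +
          (univ.filter fun p : F × F => p.2 = 0).card := Finset.card_union_le _ _
      _ ≤ Fintype.card F + Fintype.card F := by
        gcongr
        · apply Finset.card_le_card_of_injOn (fun p => p.2) (fun p _ => mem_univ _)
          intro p hp q hq hpq
          simp only [coe_filter, Set.mem_setOf_eq, mem_univ, true_and] at hp hq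
          exact Prod.ext (hp.trans hq.symm) hpq
        · apply Finset.card_le_card_of_injOn (fun p => p.1) (fun p _ => mem_univ _)
          intro p hp q hq hpq
          simp only [coe_filter, Set.mem_setOf_eq, mem_univ, true_and] at hp hq
          exact Prod.ext hpq (hp.trans hq.symm)
      _ = 2 * Fintype.card F := by ring
  · rw [pair_card hm]; omega





lemma root_card (t d : F) :
    (univ.filter fun a : F => a * (t - a) - d = 0).card ≤ 2 := by
  have h : (univ.filter fun a : F => a * (t - a) - d = 0)
      = (univ.filter fun a : F => a * a + (-t) * a + d = 0) := by
    apply Finset.filter_congr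
    intro a _
    constructor <;> intro h <;> linear_combination -h
  rw [h]; exact quad_card _ _

lemma fibre_eq_sum (t d : F) :
    (univ.filter fun M : Matrix (Fin 2) (Fin 2) F => M.trace = t ∧ M.det = d).card
      = ∑ a : F, (univ.filter fun p : F × F => p.1 * p.2 = a * (t - a) - d).card := by
  rw [Finset.card_eq_sum_card_fiberwise (f := fun M => M 0 0) (t := univ)
    (fun M _ => mem_univ _)]
  refine Finset.sum_congr rfl fun a _ => ?_
  apply Finset.card_bij' (fun M _ => ((M 0 1, M 1 0) : F × F))
    (fun p _ => !![a, p.1; p.2, t - a])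
  · intro M hM
    simp only [mem_filter, mem_univ, true_and, Matrix.trace_fin_two, Matrix.det_fin_two] at hM
    obtain ⟨⟨htr, hdet⟩, h00⟩ := hM
    simp only [mem_filter, mem_univ, true_and]
    linear_combination (M 1 1 - a) * h00 + a * htr - hdet
  · intro p hp
    simp only [mem_filter, mem_univ, true_and] at hp
    simp only [mem_filter, mem_univ, true_and]
    refine ⟨⟨?_, ?_⟩, ?_⟩
    · rw [Matrix.trace_fin_two]; simp
    · rw [Matrix.det_fin_two]; simp; linear_combination -hp
    · simp
  · intro M hM
    simp only [mem_filter, mem_univ, true_and, Matrix.trace_fin_two] at hM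
    obtain ⟨⟨htr, _⟩, h00⟩ := hM
    have h11 : M 1 1 = t - a := by linear_combination htr - h00
    conv_rhs => rw [Matrix.eta_fin_two M]
    rw [h00, h11]
  · intro p hp
    simp

lemma fibre_le (t d : F) :
    (univ.filter fun M : Matrix (Fin 2) (Fin 2) F => M.trace = t ∧ M.det = d).card
      ≤ Fintype.card F * Fintype.card F + 3 * Fintype.card F := by
  set q := Fintype.card F with hq
  obtain ⟨m, hm⟩ : ∃ m, q = m + 1 := ⟨q - 1, by have := Fintype.card_pos (α := F); omega⟩
  rw [fibre_eq_sum]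
  calc ∑ a : F, (univ.filter fun p : F × F => p.1 * p.2 = a * (t - a) - d).card
      ≤ ∑ a : F, (if a * (t - a) - d = 0 then 2 * q else q - 1) := by
        apply Finset.sum_le_sum
        intro a _
        by_cases h : a * (t - a) - d = 0
        · rw [if_pos h]; exact pair_card_le _
        · rw [if_neg h, pair_card h]
    _ = (univ.filter fun a : F => a * (t - a) - d = 0).card * (2 * q)
        + (univ.filter fun a : F => ¬(a * (t - a) - d = 0)).card * (q - 1) := by
        rw [Finset.sum_ite, Finset.sum_const, Finset.sum_const]; simp [mul_comm]
    _ ≤ 2 * (2 * q) + q * (q - 1) := by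
        refine Nat.add_le_add (Nat.mul_le_mul_right _ (root_card t d))
          (Nat.mul_le_mul_right _ ?_)
        calc (univ.filter fun a : F => ¬(a * (t - a) - d = 0)).card
            ≤ (univ : Finset F).card := Finset.card_le_card (Finset.filter_subset _ _)
          _ = q := Finset.card_univ
    _ ≤ q * q + 3 * q := by rw [hm]; simp only [Nat.add_sub_cancel]; nlinarith

lemma fibre_ge (t d : F) :
    Fintype.card F * Fintype.card F
      ≤ (univ.filter fun M : Matrix (Fin 2) (Fin 2) F => M.trace = t ∧ M.det = d).card
        + 3 * Fintype.card F := by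
  set q := Fintype.card F with hq
  obtain ⟨m, hm⟩ : ∃ m, q = m + 1 := ⟨q - 1, by have := Fintype.card_pos (α := F); omega⟩
  rw [fibre_eq_sum]
  have hsplit : (univ.filter fun a : F => a * (t - a) - d = 0).card
      + (univ.filter fun a : F => ¬(a * (t - a) - d = 0)).card = q := by
    rw [Finset.card_filter_add_card_filter_not, Finset.card_univ]
  set k := (univ.filter fun a : F => ¬(a * (t - a) - d = 0)).card with hk
  have h1 : k * m ≤ ∑ a : F, (univ.filter fun p : F × F => p.1 * p.2 = a * (t - a) - d).card := by
    calc k * m = ∑ _a ∈ univ.filter fun a : F => ¬(a * (t - a) - d = 0), m := by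
          rw [Finset.sum_const, smul_eq_mul]
      _ ≤ ∑ a ∈ univ.filter fun a : F => ¬(a * (t - a) - d = 0),
            (univ.filter fun p : F × F => p.1 * p.2 = a * (t - a) - d).card := by
          apply Finset.sum_le_sum
          intro a ha
          simp only [mem_filter, mem_univ, true_and] at ha
          rw [pair_card ha, ← hq, hm, Nat.add_sub_cancel]
      _ ≤ _ := Finset.sum_le_sum_of_subset (Finset.filter_subset _ _)
  have hr : (univ.filter fun a : F => a * (t - a) - d = 0).card ≤ 2 := root_card t d
  have h2 : q * q ≤ k * m + 3 * q := by
    rw [hm] at hsplit ⊢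
    nlinarith
  omega





/-- Twice the number of t with t²-4d a nonzero square equals the number of pairs. -/
lemma s1_double (d : F) (h2 : (2 : F) ≠ 0) :
    2 * (univ.filter fun t : F => ∃ y : F, y ≠ 0 ∧ t ^ 2 - 4 * d = y ^ 2).card
      = (univ.filter fun p : F × F => p.2 ≠ 0 ∧ p.1 ^ 2 - 4 * d = p.2 ^ 2).card := by
  rw [Finset.card_eq_sum_card_fiberwise (f := fun p : F × F => p.1) (t := univ)
    (fun p _ => mem_univ _)]
  have key : ∀ t : F,
      ((univ.filter fun p : F × F => p.2 ≠ 0 ∧ p.1 ^ 2 - 4 * d = p.2 ^ 2).filter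
        fun p => p.1 = t).card
      = if (∃ y : F, y ≠ 0 ∧ t ^ 2 - 4 * d = y ^ 2) then 2 else 0 := by
    intro t
    have hbij : ((univ.filter fun p : F × F => p.2 ≠ 0 ∧ p.1 ^ 2 - 4 * d = p.2 ^ 2).filter
        fun p => p.1 = t).card
        = (univ.filter fun y : F => y ≠ 0 ∧ t ^ 2 - 4 * d = y ^ 2).card := by
      apply Finset.card_bij' (fun p _ => p.2) (fun y _ => ((t, y) : F × F))
      · intro p hp
        simp only [mem_filter, mem_univ, true_and] at hp
        obtain ⟨⟨h1, h2'⟩, h3⟩ := hp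
        simp only [mem_filter, mem_univ, true_and]
        exact ⟨h1, h3 ▸ h2'⟩
      · intro y hy
        simp only [mem_filter, mem_univ, true_and] at hy
        simp only [mem_filter, mem_univ, true_and]
        exact ⟨⟨hy.1, hy.2⟩, by trivial⟩
      · intro p hp
        simp only [mem_filter, mem_univ, true_and] at hp
        exact Prod.ext hp.2.symm rfl
      · intro y hy; rfl
    rw [hbij]
    by_cases h : ∃ y : F, y ≠ 0 ∧ t ^ 2 - 4 * d = y ^ 2
    · rw [if_pos h]
      obtain ⟨y₀, hy₀, he⟩ := h
      have hset : (univ.filter fun y : F => y ≠ 0 ∧ t ^ 2 - 4 * d = y ^ 2) = {y₀, -y₀} := by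
        ext y
        simp only [mem_filter, mem_univ, true_and, mem_insert, mem_singleton]
        constructor
        · rintro ⟨hy, hy2⟩
          have : (y - y₀) * (y + y₀) = 0 := by linear_combination he - hy2
          rcases mul_eq_zero.mp this with h | h
          · left; linear_combination h
          · right; linear_combination h
        · rintro (rfl | rfl)
          · exact ⟨hy₀, he⟩
          · exact ⟨neg_ne_zero.mpr hy₀, by linear_combination he⟩
      rw [hset, Finset.card_insert_of_notMem, Finset.card_singleton]
      simp only [mem_singleton]
      intro hcontra
      apply hy₀
      have : (2 : F) * y₀ = 0 := by linear_combination hcontra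
      rcases mul_eq_zero.mp this with h | h
      · exact absurd h h2
      · exact h
    · rw [if_neg h]
      rw [Finset.card_eq_zero]
      ext y
      simp only [mem_filter, mem_univ, true_and, notMem_empty, iff_false]
      intro hy
      exact h ⟨y, hy.1, hy.2⟩
  rw [Finset.sum_congr rfl fun t _ => key t]
  rw [← Finset.sum_filter]
  rw [Finset.sum_const, smul_eq_mul, mul_comm]

/-- Bounds for the number of pairs (t,y), y ≠ 0, t² - y² = 4d. -/
lemma pairP_bounds {d : F} (hd : d ≠ 0) (h2 : (2 : F) ≠ 0) :
    Fintype.card F ≤ (univ.filter fun p : F × F => p.2 ≠ 0 ∧ p.1 ^ 2 - 4 * d = p.2 ^ 2).card + 3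
    ∧ (univ.filter fun p : F × F => p.2 ≠ 0 ∧ p.1 ^ 2 - 4 * d = p.2 ^ 2).card + 1
        ≤ Fintype.card F := by
  set q := Fintype.card F with hq
  have h4d : (4 : F) * d ≠ 0 := by
    intro h
    rcases mul_eq_zero.mp h with h | h
    · have : (2:F) * 2 = 0 := by linear_combination h
      rcases mul_eq_zero.mp this with h' | h' <;> exact h2 h'
    · exact hd h
  -- bijection with pairs (u,v), uv = 4d, u ≠ v
  have hbij : (univ.filter fun p : F × F => p.2 ≠ 0 ∧ p.1 ^ 2 - 4 * d = p.2 ^ 2).card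
      = (univ.filter fun p : F × F => p.1 * p.2 = 4 * d ∧ p.1 ≠ p.2).card := by
    apply Finset.card_bij' (fun p _ => ((p.1 - p.2, p.1 + p.2) : F × F))
      (fun p _ => (((p.1 + p.2) * 2⁻¹, (p.2 - p.1) * 2⁻¹) : F × F))
    · intro p hp
      simp only [mem_filter, mem_univ, true_and] at hp ⊢
      obtain ⟨hy, he⟩ := hp
      constructor
      · linear_combination he
      · intro hcontra
        apply hy
        have : (2:F) * p.2 = 0 := by linear_combination -hcontra
        rcases mul_eq_zero.mp this with h | h
        · exact absurd h h2
        · exact h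
    · intro p hp
      simp only [mem_filter, mem_univ, true_and] at hp ⊢
      obtain ⟨he, hne⟩ := hp
      constructor
      · intro hcontra
        apply hne
        have h0 : p.2 - p.1 = 0 := by
          have := mul_eq_zero.mp hcontra
          rcases this with h | h
          · exact h
          · exact absurd h (inv_ne_zero h2)
        linear_combination -h0
      · field_simp
        ring_nf
        linear_combination (4:F) * he
    · intro p hp
      simp only [mem_filter, mem_univ, true_and] at hp
      have : ((p.1 - p.2 + (p.1 + p.2)) * 2⁻¹, (p.1 + p.2 - (p.1 - p.2)) * 2⁻¹) = p := by
        have e1 : (p.1 - p.2 + (p.1 + p.2)) * 2⁻¹ = p.1 := by field_simp; ring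
        have e2 : (p.1 + p.2 - (p.1 - p.2)) * 2⁻¹ = p.2 := by field_simp; ring
        exact Prod.ext e1 e2
      exact this
    · intro p hp
      simp only [mem_filter, mem_univ, true_and] at hp
      have e1 : (p.1 + p.2) * 2⁻¹ - (p.2 - p.1) * 2⁻¹ = p.1 := by field_simp; ring
      have e2 : (p.1 + p.2) * 2⁻¹ + (p.2 - p.1) * 2⁻¹ = p.2 := by field_simp; ring
      exact Prod.ext e1 e2
  have hsplit : (univ.filter fun p : F × F => p.1 * p.2 = 4 * d ∧ p.1 ≠ p.2).card
      + (univ.filter fun p : F × F => p.1 * p.2 = 4 * d ∧ p.1 = p.2).card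
      = (univ.filter fun p : F × F => p.1 * p.2 = 4 * d).card := by
    have h := Finset.card_filter_add_card_filter_not
      (s := univ.filter fun p : F × F => p.1 * p.2 = 4 * d) (p := fun p => p.1 ≠ p.2)
    simp only [not_not] at h
    rw [Finset.filter_filter, Finset.filter_filter] at h
    exact h
  have heq : (univ.filter fun p : F × F => p.1 * p.2 = 4 * d ∧ p.1 = p.2).card ≤ 2 := by
    calc (univ.filter fun p : F × F => p.1 * p.2 = 4 * d ∧ p.1 = p.2).card
        ≤ (univ.filter fun x : F => x * x + 0 * x + (-(4 * d)) = 0).card := by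
          apply Finset.card_le_card_of_injOn (fun p => p.1) ?_ ?_
          · intro p hp
            simp only [Finset.mem_coe, mem_filter, mem_univ, true_and] at hp ⊢
            linear_combination hp.1 + p.1 * hp.2
          · intro p hp p' hp' hpp
            simp only [coe_filter, Set.mem_setOf_eq, mem_univ, true_and] at hp hp'
            exact Prod.ext hpp (by rw [← hp.2, ← hp'.2]; exact hpp)
      _ ≤ 2 := quad_card _ _
  have hP' : (univ.filter fun p : F × F => p.1 * p.2 = 4 * d).card = q - 1 := pair_card h4d
  have hq1 : 1 ≤ q := Fintype.card_pos
  constructor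
  · omega
  · omega




lemma s1_bounds {d : F} (hd : d ≠ 0) (h2 : (2 : F) ≠ 0) :
    Fintype.card F ≤ 2 * (univ.filter fun t : F => ∃ y : F, y ≠ 0 ∧ t ^ 2 - 4 * d = y ^ 2).card + 3
    ∧ 2 * (univ.filter fun t : F => ∃ y : F, y ≠ 0 ∧ t ^ 2 - 4 * d = y ^ 2).card + 1
        ≤ Fintype.card F := by
  rw [s1_double d h2]
  exact pairP_bounds hd h2

lemma t1_bounds {d : F} (hd : d ≠ 0) (h2 : (2 : F) ≠ 0) :
    Fintype.card F
      ≤ 2 * (univ.filter fun t : F => (∃ y : F, y ≠ 0 ∧ t ^ 2 - 4 * d = y ^ 2) ∧ t ≠ 0).card + 5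
    ∧ 2 * (univ.filter fun t : F => (∃ y : F, y ≠ 0 ∧ t ^ 2 - 4 * d = y ^ 2) ∧ t ≠ 0).card + 1
        ≤ Fintype.card F := by
  obtain ⟨ha, hb⟩ := s1_bounds hd h2
  have hc : (univ.filter fun t : F => ∃ y : F, y ≠ 0 ∧ t ^ 2 - 4 * d = y ^ 2).card
      ≤ (insert (0:F) (univ.filter fun t : F => (∃ y : F, y ≠ 0 ∧ t ^ 2 - 4 * d = y ^ 2) ∧ t ≠ 0)).card := by
    apply Finset.card_le_card
    intro x hx
    by_cases hx0 : x = 0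
    · rw [hx0]; exact mem_insert_self _ _
    · apply Finset.mem_insert_of_mem
      simp only [mem_filter, mem_univ, true_and] at hx ⊢
      exact ⟨hx, hx0⟩
  have hc2 : (insert (0:F) (univ.filter fun t : F => (∃ y : F, y ≠ 0 ∧ t ^ 2 - 4 * d = y ^ 2) ∧ t ≠ 0)).card ≤ (univ.filter fun t : F => (∃ y : F, y ≠ 0 ∧ t ^ 2 - 4 * d = y ^ 2) ∧ t ≠ 0).card + 1 := Finset.card_insert_le _ _
  have hd' : (univ.filter fun t : F => (∃ y : F, y ≠ 0 ∧ t ^ 2 - 4 * d = y ^ 2) ∧ t ≠ 0).card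
      ≤ (univ.filter fun t : F => ∃ y : F, y ≠ 0 ∧ t ^ 2 - 4 * d = y ^ 2).card := by
    apply Finset.card_le_card
    intro x hx
    simp only [mem_filter, mem_univ, true_and] at hx ⊢
    exact hx.1
  omega

lemma t2_bounds {d : F} (hd : d ≠ 0) (h2 : (2 : F) ≠ 0) :
    Fintype.card F
      ≤ 2 * (univ.filter fun t : F => (¬ ∃ y : F, t ^ 2 - 4 * d = y ^ 2) ∧ t ≠ 0).card + 5
    ∧ 2 * (univ.filter fun t : F => (¬ ∃ y : F, t ^ 2 - 4 * d = y ^ 2) ∧ t ≠ 0).card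
        ≤ Fintype.card F + 3 := by
  obtain ⟨ha, hb⟩ := s1_bounds hd h2
  have hc : (univ.filter fun t : F => ¬ ∃ y : F, t ^ 2 - 4 * d = y ^ 2).card
      ≤ (insert (0:F) (univ.filter fun t : F => (¬ ∃ y : F, t ^ 2 - 4 * d = y ^ 2) ∧ t ≠ 0)).card := by
    apply Finset.card_le_card
    intro x hx
    by_cases hx0 : x = 0
    · rw [hx0]; exact mem_insert_self _ _
    · apply Finset.mem_insert_of_mem
      simp only [mem_filter, mem_univ, true_and] at hx ⊢
      exact ⟨hx, hx0⟩
  have hc2 : (insert (0:F) (univ.filter fun t : F => (¬ ∃ y : F, t ^ 2 - 4 * d = y ^ 2) ∧ t ≠ 0)).card ≤ (univ.filter fun t : F => (¬ ∃ y : F, t ^ 2 - 4 * d = y ^ 2) ∧ t ≠ 0).card + 1 := Finset.card_insert_le _ _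
  have hd' : (univ.filter fun t : F => (¬ ∃ y : F, t ^ 2 - 4 * d = y ^ 2) ∧ t ≠ 0).card
      ≤ (univ.filter fun t : F => ¬ ∃ y : F, t ^ 2 - 4 * d = y ^ 2).card := by
    apply Finset.card_le_card
    intro x hx
    simp only [mem_filter, mem_univ, true_and] at hx ⊢
    exact hx.1
  -- complement relation
  have hcompl : (univ.filter fun t : F => ¬ ∃ y : F, t ^ 2 - 4 * d = y ^ 2).card
      + (univ.filter fun t : F => ∃ y : F, t ^ 2 - 4 * d = y ^ 2).card = Fintype.card F := by
    have h := Finset.card_filter_add_card_filter_not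
      (s := (univ : Finset F)) (p := fun t => ∃ y : F, t ^ 2 - 4 * d = y ^ 2)
    rw [Finset.card_univ] at h
    omega
  -- S vs S₁
  have hsub1 : (univ.filter fun t : F => ∃ y : F, y ≠ 0 ∧ t ^ 2 - 4 * d = y ^ 2).card
      ≤ (univ.filter fun t : F => ∃ y : F, t ^ 2 - 4 * d = y ^ 2).card := by
    apply Finset.card_le_card
    intro x hx
    simp only [mem_filter, mem_univ, true_and] at hx ⊢
    obtain ⟨y, _, hy⟩ := hx
    exact ⟨y, hy⟩
  have hsub2 : (univ.filter fun t : F => ∃ y : F, t ^ 2 - 4 * d = y ^ 2).card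
      ≤ (univ.filter fun t : F => ∃ y : F, y ≠ 0 ∧ t ^ 2 - 4 * d = y ^ 2).card + 2 := by
    have hQ : (univ.filter fun t : F => t * t + 0 * t + (-(4 * d)) = 0).card ≤ 2 :=
      quad_card _ _
    have hsub : (univ.filter fun t : F => ∃ y : F, t ^ 2 - 4 * d = y ^ 2)
        ⊆ (univ.filter fun t : F => ∃ y : F, y ≠ 0 ∧ t ^ 2 - 4 * d = y ^ 2)
          ∪ (univ.filter fun t : F => t * t + 0 * t + (-(4 * d)) = 0) := by
      intro x hx
      simp only [mem_filter, mem_univ, true_and, mem_union] at hx ⊢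
      obtain ⟨y, hy⟩ := hx
      by_cases hy0 : y = 0
      · right; rw [hy0] at hy; linear_combination hy
      · left; exact ⟨y, hy0, hy⟩
    calc (univ.filter fun t : F => ∃ y : F, t ^ 2 - 4 * d = y ^ 2).card
        ≤ _ := Finset.card_le_card hsub
      _ ≤ _ + _ := Finset.card_union_le _ _
      _ ≤ _ + 2 := by omega
  omega




lemma sqrt_card (v : F) :
    (univ.filter fun t : F => t ^ 2 = v).card ≤ 2 := by
  have h : (univ.filter fun t : F => t ^ 2 = v)
      = (univ.filter fun t : F => t * t + 0 * t + (-v) = 0) :=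
    Finset.filter_congr fun t _ => by constructor <;> intro h <;> linear_combination h
  rw [h]; exact quad_card _ _

lemma t3_bound {d : F} (hd : d ≠ 0) :
    Fintype.card F ≤ (univ.filter fun t : F =>
      t ^ 2 * d⁻¹ ≠ 0 ∧ t ^ 2 * d⁻¹ ≠ 1 ∧ t ^ 2 * d⁻¹ ≠ 2 ∧ t ^ 2 * d⁻¹ ≠ 4 ∧
      (t ^ 2 * d⁻¹) ^ 2 - 3 * (t ^ 2 * d⁻¹) + 1 ≠ 0).card + 12 := by
  have h := Finset.card_filter_add_card_filter_not
    (s := (univ : Finset F)) (p := fun t : F =>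
      t ^ 2 * d⁻¹ ≠ 0 ∧ t ^ 2 * d⁻¹ ≠ 1 ∧ t ^ 2 * d⁻¹ ≠ 2 ∧ t ^ 2 * d⁻¹ ≠ 4 ∧
      (t ^ 2 * d⁻¹) ^ 2 - 3 * (t ^ 2 * d⁻¹) + 1 ≠ 0)
  rw [Finset.card_univ] at h
  have hval : ∀ v : F, ∀ t : F, t ^ 2 * d⁻¹ = v → t ^ 2 = v * d := by
    intro v t ht
    field_simp at ht
    linear_combination ht
  set f0 := univ.filter fun t : F => t ^ 2 = 0 * d with hf0
  set f1 := univ.filter fun t : F => t ^ 2 = 1 * d with hf1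
  set f2 := univ.filter fun t : F => t ^ 2 = 2 * d with hf2
  set f4 := univ.filter fun t : F => t ^ 2 = 4 * d with hf4
  set fq := univ.filter (fun t : F =>
      (t ^ 2 * d⁻¹) ^ 2 - 3 * (t ^ 2 * d⁻¹) + 1 = 0) with hfq
  have hsub : (univ.filter fun t : F => ¬(t ^ 2 * d⁻¹ ≠ 0 ∧ t ^ 2 * d⁻¹ ≠ 1 ∧
      t ^ 2 * d⁻¹ ≠ 2 ∧ t ^ 2 * d⁻¹ ≠ 4 ∧
      (t ^ 2 * d⁻¹) ^ 2 - 3 * (t ^ 2 * d⁻¹) + 1 ≠ 0))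
      ⊆ (((f0 ∪ f1) ∪ f2) ∪ f4) ∪ fq := by
    intro t ht
    simp only [hf0, hf1, hf2, hf4, hfq, mem_filter, mem_univ, true_and, not_and_or,
      not_not, mem_union] at ht ⊢
    rcases ht with h | h | h | h | h
    · exact Or.inl (Or.inl (Or.inl (Or.inl (hval 0 t h))))
    · exact Or.inl (Or.inl (Or.inl (Or.inr (hval 1 t h))))
    · exact Or.inl (Or.inl (Or.inr (hval 2 t h)))
    · exact Or.inl (Or.inr (hval 4 t h))
    · exact Or.inr h
  have hquartic : fq.card ≤ 4 := by
    have himg : (fq.image fun t => t ^ 2 * d⁻¹)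
        ⊆ univ.filter fun u : F => u * u + (-3) * u + 1 = 0 := by
      intro u hu
      simp only [hfq, mem_image, mem_filter, mem_univ, true_and] at hu ⊢
      obtain ⟨t, ht, rfl⟩ := hu
      linear_combination ht
    have hfib := Finset.card_le_mul_card_image (s := fq) (f := fun t : F => t ^ 2 * d⁻¹) 2 ?_
    · calc fq.card ≤ 2 * (fq.image fun t => t ^ 2 * d⁻¹).card := hfib
        _ ≤ 2 * 2 := by
            apply Nat.mul_le_mul_left
            exact le_trans (Finset.card_le_card himg) (quad_card _ _)
        _ = 4 := rfl
    · intro b _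
      calc (fq.filter fun t => t ^ 2 * d⁻¹ = b).card
          ≤ (univ.filter fun t : F => t ^ 2 = b * d).card := by
            apply Finset.card_le_card
            intro t ht
            simp only [hfq, mem_filter, mem_univ, true_and] at ht ⊢
            exact hval b t ht.2
        _ ≤ 2 := sqrt_card _
  have step1 : (univ.filter fun t : F => ¬(t ^ 2 * d⁻¹ ≠ 0 ∧ t ^ 2 * d⁻¹ ≠ 1 ∧
      t ^ 2 * d⁻¹ ≠ 2 ∧ t ^ 2 * d⁻¹ ≠ 4 ∧
      (t ^ 2 * d⁻¹) ^ 2 - 3 * (t ^ 2 * d⁻¹) + 1 ≠ 0)).card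
      ≤ ((((f0 ∪ f1) ∪ f2) ∪ f4) ∪ fq).card := Finset.card_le_card hsub
  have step2 := Finset.card_union_le (((f0 ∪ f1) ∪ f2) ∪ f4) fq
  have step3 := Finset.card_union_le ((f0 ∪ f1) ∪ f2) f4
  have step4 := Finset.card_union_le (f0 ∪ f1) f2
  have step5 := Finset.card_union_le f0 f1
  have c1 : f0.card ≤ 2 := sqrt_card _
  have c2 : f1.card ≤ 2 := sqrt_card _
  have c3 : f2.card ≤ 2 := sqrt_card _
  have c4 : f4.card ≤ 2 := sqrt_card _
  omega



lemma ncard_GL {d : F} (hd : d ≠ 0) (Q : Matrix (Fin 2) (Fin 2) F → Prop)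
    [DecidablePred Q] (hQ : ∀ M, Q M → M.det = d) :
    Set.ncard {A : Matrix.GeneralLinearGroup (Fin 2) F | Q (A : Matrix (Fin 2) (Fin 2) F)}
      = (univ.filter Q).card := by
  rw [Set.ncard_eq_toFinset_card']
  refine Finset.card_bij
    (s := {A : Matrix.GeneralLinearGroup (Fin 2) F | Q (A : Matrix (Fin 2) (Fin 2) F)}.toFinset)
    (t := univ.filter Q)
    (fun A _ => (A : Matrix (Fin 2) (Fin 2) F)) ?_ ?_ ?_
  · intro A hA
    simp only [Set.mem_toFinset, Set.mem_setOf_eq] at hA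
    simp only [mem_filter, mem_univ, true_and]
    exact hA
  · intro A hA B hB hAB
    exact Units.ext hAB
  · intro M hM
    simp only [mem_filter, mem_univ, true_and] at hM
    have hu : IsUnit M := by
      rw [Matrix.isUnit_iff_isUnit_det, hQ M hM]
      exact isUnit_iff_ne_zero.mpr hd
    obtain ⟨u, rfl⟩ := hu
    exact ⟨u, by simp [Set.mem_toFinset, hM], rfl⟩

lemma count1_bounds (d : F) :
    (univ.filter fun M : Matrix (Fin 2) (Fin 2) F => M.det = d ∧ ((∃ y : F, y ≠ 0 ∧ M.trace ^ 2 - 4 * d = y ^ 2) ∧ M.trace ≠ 0)).card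
      ≤ (univ.filter fun t : F => (∃ y : F, y ≠ 0 ∧ t ^ 2 - 4 * d = y ^ 2) ∧ t ≠ 0).card
          * (Fintype.card F * Fintype.card F + 3 * Fintype.card F)
    ∧ (univ.filter fun t : F => (∃ y : F, y ≠ 0 ∧ t ^ 2 - 4 * d = y ^ 2) ∧ t ≠ 0).card * (Fintype.card F * Fintype.card F)
      ≤ (univ.filter fun M : Matrix (Fin 2) (Fin 2) F => M.det = d ∧ ((∃ y : F, y ≠ 0 ∧ M.trace ^ 2 - 4 * d = y ^ 2) ∧ M.trace ≠ 0)).card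
        + (univ.filter fun t : F => (∃ y : F, y ≠ 0 ∧ t ^ 2 - 4 * d = y ^ 2) ∧ t ≠ 0).card * (3 * Fintype.card F) := by
  have hstep : (univ.filter fun M : Matrix (Fin 2) (Fin 2) F => M.det = d ∧ ((∃ y : F, y ≠ 0 ∧ M.trace ^ 2 - 4 * d = y ^ 2) ∧ M.trace ≠ 0)).card
      = ∑ t ∈ univ.filter fun t : F => (∃ y : F, y ≠ 0 ∧ t ^ 2 - 4 * d = y ^ 2) ∧ t ≠ 0,
          (univ.filter fun M : Matrix (Fin 2) (Fin 2) F => M.trace = t ∧ M.det = d).card := by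
    rw [Finset.card_eq_sum_card_fiberwise (f := fun M : Matrix (Fin 2) (Fin 2) F => M.trace)
      (t := univ.filter fun t : F => (∃ y : F, y ≠ 0 ∧ t ^ 2 - 4 * d = y ^ 2) ∧ t ≠ 0) (fun M hM => by
        simp only [Finset.mem_coe, mem_filter, mem_univ, true_and] at hM ⊢
        exact hM.2)]
    refine Finset.sum_congr rfl fun t ht => ?_
    congr 1
    ext M
    simp only [mem_filter, mem_univ, true_and] at ht ⊢
    constructor
    · rintro ⟨⟨h1, h2⟩, h3⟩
      exact ⟨h3, h1⟩
    · rintro ⟨h1, h2⟩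
      refine ⟨⟨h2, ?_⟩, h1⟩
      rw [h1]
      exact ht
  rw [hstep]
  constructor
  · calc ∑ t ∈ univ.filter fun t : F => (∃ y : F, y ≠ 0 ∧ t ^ 2 - 4 * d = y ^ 2) ∧ t ≠ 0,
        (univ.filter fun M : Matrix (Fin 2) (Fin 2) F => M.trace = t ∧ M.det = d).card
        ≤ ∑ _t ∈ univ.filter fun t : F => (∃ y : F, y ≠ 0 ∧ t ^ 2 - 4 * d = y ^ 2) ∧ t ≠ 0,
            (Fintype.card F * Fintype.card F + 3 * Fintype.card F) :=
          Finset.sum_le_sum fun t _ => fibre_le t d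
      _ = _ := by rw [Finset.sum_const, smul_eq_mul]
  · calc (univ.filter fun t : F => (∃ y : F, y ≠ 0 ∧ t ^ 2 - 4 * d = y ^ 2) ∧ t ≠ 0).card * (Fintype.card F * Fintype.card F)
        = ∑ _t ∈ univ.filter fun t : F => (∃ y : F, y ≠ 0 ∧ t ^ 2 - 4 * d = y ^ 2) ∧ t ≠ 0, Fintype.card F * Fintype.card F := by
          rw [Finset.sum_const, smul_eq_mul]
      _ ≤ ∑ t ∈ univ.filter fun t : F => (∃ y : F, y ≠ 0 ∧ t ^ 2 - 4 * d = y ^ 2) ∧ t ≠ 0,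
          ((univ.filter fun M : Matrix (Fin 2) (Fin 2) F => M.trace = t ∧ M.det = d).card
            + 3 * Fintype.card F) := Finset.sum_le_sum fun t _ => fibre_ge t d
      _ = _ := by rw [Finset.sum_add_distrib, Finset.sum_const, smul_eq_mul]

lemma count2_bounds (d : F) :
    (univ.filter fun M : Matrix (Fin 2) (Fin 2) F => M.det = d ∧ ((¬ ∃ y : F, M.trace ^ 2 - 4 * d = y ^ 2) ∧ M.trace ≠ 0)).card
      ≤ (univ.filter fun t : F => (¬ ∃ y : F, t ^ 2 - 4 * d = y ^ 2) ∧ t ≠ 0).card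
          * (Fintype.card F * Fintype.card F + 3 * Fintype.card F)
    ∧ (univ.filter fun t : F => (¬ ∃ y : F, t ^ 2 - 4 * d = y ^ 2) ∧ t ≠ 0).card * (Fintype.card F * Fintype.card F)
      ≤ (univ.filter fun M : Matrix (Fin 2) (Fin 2) F => M.det = d ∧ ((¬ ∃ y : F, M.trace ^ 2 - 4 * d = y ^ 2) ∧ M.trace ≠ 0)).card
        + (univ.filter fun t : F => (¬ ∃ y : F, t ^ 2 - 4 * d = y ^ 2) ∧ t ≠ 0).card * (3 * Fintype.card F) := by
  have hstep : (univ.filter fun M : Matrix (Fin 2) (Fin 2) F => M.det = d ∧ ((¬ ∃ y : F, M.trace ^ 2 - 4 * d = y ^ 2) ∧ M.trace ≠ 0)).card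
      = ∑ t ∈ univ.filter fun t : F => (¬ ∃ y : F, t ^ 2 - 4 * d = y ^ 2) ∧ t ≠ 0,
          (univ.filter fun M : Matrix (Fin 2) (Fin 2) F => M.trace = t ∧ M.det = d).card := by
    rw [Finset.card_eq_sum_card_fiberwise (f := fun M : Matrix (Fin 2) (Fin 2) F => M.trace)
      (t := univ.filter fun t : F => (¬ ∃ y : F, t ^ 2 - 4 * d = y ^ 2) ∧ t ≠ 0) (fun M hM => by
        simp only [Finset.mem_coe, mem_filter, mem_univ, true_and] at hM ⊢
        exact hM.2)]
    refine Finset.sum_congr rfl fun t ht => ?_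
    congr 1
    ext M
    simp only [mem_filter, mem_univ, true_and] at ht ⊢
    constructor
    · rintro ⟨⟨h1, h2⟩, h3⟩
      exact ⟨h3, h1⟩
    · rintro ⟨h1, h2⟩
      refine ⟨⟨h2, ?_⟩, h1⟩
      rw [h1]
      exact ht
  rw [hstep]
  constructor
  · calc ∑ t ∈ univ.filter fun t : F => (¬ ∃ y : F, t ^ 2 - 4 * d = y ^ 2) ∧ t ≠ 0,
        (univ.filter fun M : Matrix (Fin 2) (Fin 2) F => M.trace = t ∧ M.det = d).card
        ≤ ∑ _t ∈ univ.filter fun t : F => (¬ ∃ y : F, t ^ 2 - 4 * d = y ^ 2) ∧ t ≠ 0,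
            (Fintype.card F * Fintype.card F + 3 * Fintype.card F) :=
          Finset.sum_le_sum fun t _ => fibre_le t d
      _ = _ := by rw [Finset.sum_const, smul_eq_mul]
  · calc (univ.filter fun t : F => (¬ ∃ y : F, t ^ 2 - 4 * d = y ^ 2) ∧ t ≠ 0).card * (Fintype.card F * Fintype.card F)
        = ∑ _t ∈ univ.filter fun t : F => (¬ ∃ y : F, t ^ 2 - 4 * d = y ^ 2) ∧ t ≠ 0, Fintype.card F * Fintype.card F := by
          rw [Finset.sum_const, smul_eq_mul]
      _ ≤ ∑ t ∈ univ.filter fun t : F => (¬ ∃ y : F, t ^ 2 - 4 * d = y ^ 2) ∧ t ≠ 0,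
          ((univ.filter fun M : Matrix (Fin 2) (Fin 2) F => M.trace = t ∧ M.det = d).card
            + 3 * Fintype.card F) := Finset.sum_le_sum fun t _ => fibre_ge t d
      _ = _ := by rw [Finset.sum_add_distrib, Finset.sum_const, smul_eq_mul]

set_option maxHeartbeats 2000000 in
lemma count3_bounds (d : F) :
    (univ.filter fun M : Matrix (Fin 2) (Fin 2) F => M.det = d ∧ (M.trace ^ 2 * d⁻¹ ≠ 0 ∧ M.trace ^ 2 * d⁻¹ ≠ 1 ∧ M.trace ^ 2 * d⁻¹ ≠ 2 ∧ M.trace ^ 2 * d⁻¹ ≠ 4 ∧ (M.trace ^ 2 * d⁻¹) ^ 2 - 3 * (M.trace ^ 2 * d⁻¹) + 1 ≠ 0)).card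
      ≤ (univ.filter fun t : F => t ^ 2 * d⁻¹ ≠ 0 ∧ t ^ 2 * d⁻¹ ≠ 1 ∧ t ^ 2 * d⁻¹ ≠ 2 ∧ t ^ 2 * d⁻¹ ≠ 4 ∧ (t ^ 2 * d⁻¹) ^ 2 - 3 * (t ^ 2 * d⁻¹) + 1 ≠ 0).card
          * (Fintype.card F * Fintype.card F + 3 * Fintype.card F)
    ∧ (univ.filter fun t : F => t ^ 2 * d⁻¹ ≠ 0 ∧ t ^ 2 * d⁻¹ ≠ 1 ∧ t ^ 2 * d⁻¹ ≠ 2 ∧ t ^ 2 * d⁻¹ ≠ 4 ∧ (t ^ 2 * d⁻¹) ^ 2 - 3 * (t ^ 2 * d⁻¹) + 1 ≠ 0).card * (Fintype.card F * Fintype.card F)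
      ≤ (univ.filter fun M : Matrix (Fin 2) (Fin 2) F => M.det = d ∧ (M.trace ^ 2 * d⁻¹ ≠ 0 ∧ M.trace ^ 2 * d⁻¹ ≠ 1 ∧ M.trace ^ 2 * d⁻¹ ≠ 2 ∧ M.trace ^ 2 * d⁻¹ ≠ 4 ∧ (M.trace ^ 2 * d⁻¹) ^ 2 - 3 * (M.trace ^ 2 * d⁻¹) + 1 ≠ 0)).card
        + (univ.filter fun t : F => t ^ 2 * d⁻¹ ≠ 0 ∧ t ^ 2 * d⁻¹ ≠ 1 ∧ t ^ 2 * d⁻¹ ≠ 2 ∧ t ^ 2 * d⁻¹ ≠ 4 ∧ (t ^ 2 * d⁻¹) ^ 2 - 3 * (t ^ 2 * d⁻¹) + 1 ≠ 0).card * (3 * Fintype.card F) := by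
  have hstep : (univ.filter fun M : Matrix (Fin 2) (Fin 2) F => M.det = d ∧ (M.trace ^ 2 * d⁻¹ ≠ 0 ∧ M.trace ^ 2 * d⁻¹ ≠ 1 ∧ M.trace ^ 2 * d⁻¹ ≠ 2 ∧ M.trace ^ 2 * d⁻¹ ≠ 4 ∧ (M.trace ^ 2 * d⁻¹) ^ 2 - 3 * (M.trace ^ 2 * d⁻¹) + 1 ≠ 0)).card
      = ∑ t ∈ univ.filter fun t : F => t ^ 2 * d⁻¹ ≠ 0 ∧ t ^ 2 * d⁻¹ ≠ 1 ∧ t ^ 2 * d⁻¹ ≠ 2 ∧ t ^ 2 * d⁻¹ ≠ 4 ∧ (t ^ 2 * d⁻¹) ^ 2 - 3 * (t ^ 2 * d⁻¹) + 1 ≠ 0,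
          (univ.filter fun M : Matrix (Fin 2) (Fin 2) F => M.trace = t ∧ M.det = d).card := by
    rw [Finset.card_eq_sum_card_fiberwise (f := fun M : Matrix (Fin 2) (Fin 2) F => M.trace)
      (t := univ.filter fun t : F => t ^ 2 * d⁻¹ ≠ 0 ∧ t ^ 2 * d⁻¹ ≠ 1 ∧ t ^ 2 * d⁻¹ ≠ 2 ∧ t ^ 2 * d⁻¹ ≠ 4 ∧ (t ^ 2 * d⁻¹) ^ 2 - 3 * (t ^ 2 * d⁻¹) + 1 ≠ 0) (fun M hM => by
        simp only [Finset.mem_coe, mem_filter, mem_univ, true_and] at hM ⊢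
        exact hM.2)]
    refine Finset.sum_congr rfl fun t ht => ?_
    congr 1
    ext M
    simp only [mem_filter, mem_univ, true_and] at ht ⊢
    constructor
    · rintro ⟨⟨h1, h2⟩, h3⟩
      exact ⟨h3, h1⟩
    · rintro ⟨h1, h2⟩
      refine ⟨⟨h2, ?_⟩, h1⟩
      rw [h1]
      exact ht
  rw [hstep]
  constructor
  · calc ∑ t ∈ univ.filter fun t : F => t ^ 2 * d⁻¹ ≠ 0 ∧ t ^ 2 * d⁻¹ ≠ 1 ∧ t ^ 2 * d⁻¹ ≠ 2 ∧ t ^ 2 * d⁻¹ ≠ 4 ∧ (t ^ 2 * d⁻¹) ^ 2 - 3 * (t ^ 2 * d⁻¹) + 1 ≠ 0,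
        (univ.filter fun M : Matrix (Fin 2) (Fin 2) F => M.trace = t ∧ M.det = d).card
        ≤ ∑ _t ∈ univ.filter fun t : F => t ^ 2 * d⁻¹ ≠ 0 ∧ t ^ 2 * d⁻¹ ≠ 1 ∧ t ^ 2 * d⁻¹ ≠ 2 ∧ t ^ 2 * d⁻¹ ≠ 4 ∧ (t ^ 2 * d⁻¹) ^ 2 - 3 * (t ^ 2 * d⁻¹) + 1 ≠ 0,
            (Fintype.card F * Fintype.card F + 3 * Fintype.card F) :=
          Finset.sum_le_sum fun t _ => fibre_le t d
      _ = _ := by rw [Finset.sum_const, smul_eq_mul]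
  · calc (univ.filter fun t : F => t ^ 2 * d⁻¹ ≠ 0 ∧ t ^ 2 * d⁻¹ ≠ 1 ∧ t ^ 2 * d⁻¹ ≠ 2 ∧ t ^ 2 * d⁻¹ ≠ 4 ∧ (t ^ 2 * d⁻¹) ^ 2 - 3 * (t ^ 2 * d⁻¹) + 1 ≠ 0).card * (Fintype.card F * Fintype.card F)
        = ∑ _t ∈ univ.filter fun t : F => t ^ 2 * d⁻¹ ≠ 0 ∧ t ^ 2 * d⁻¹ ≠ 1 ∧ t ^ 2 * d⁻¹ ≠ 2 ∧ t ^ 2 * d⁻¹ ≠ 4 ∧ (t ^ 2 * d⁻¹) ^ 2 - 3 * (t ^ 2 * d⁻¹) + 1 ≠ 0, Fintype.card F * Fintype.card F := by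
          rw [Finset.sum_const, smul_eq_mul]
      _ ≤ ∑ t ∈ univ.filter fun t : F => t ^ 2 * d⁻¹ ≠ 0 ∧ t ^ 2 * d⁻¹ ≠ 1 ∧ t ^ 2 * d⁻¹ ≠ 2 ∧ t ^ 2 * d⁻¹ ≠ 4 ∧ (t ^ 2 * d⁻¹) ^ 2 - 3 * (t ^ 2 * d⁻¹) + 1 ≠ 0,
          ((univ.filter fun M : Matrix (Fin 2) (Fin 2) F => M.trace = t ∧ M.det = d).card
            + 3 * Fintype.card F) := Finset.sum_le_sum fun t _ => fibre_ge t d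
      _ = _ := by rw [Finset.sum_add_distrib, Finset.sum_const, smul_eq_mul]

end SerreCounting

set_option maxHeartbeats 2000000 in
/-- Uniform counting of the sets `Cᵢ(ℓ)` on each determinant fibre of `GL₂(𝔽_ℓ)`:
with `s = |SL₂(𝔽_ℓ)| = ℓ(ℓ−1)(ℓ+1)`, the fibre over any `d ≠ 0` meets `C₁`, `C₂`
in `s/2 + O(s/ℓ)` elements and `C₃` in `s + O(s/ℓ)` elements. -/
theorem stmt_17 :
    ∃ c : ℝ, 0 < c ∧ ∀ ℓ : ℕ, ℓ.Prime → 5 ≤ ℓ → ∀ d : ZMod ℓ, d ≠ 0 →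
      (|(Set.ncard {A : Matrix.GeneralLinearGroup (Fin 2) (ZMod ℓ) |
            Matrix.det (A : Matrix (Fin 2) (Fin 2) (ZMod ℓ)) = d ∧ A ∈ serreC1 ℓ} : ℝ) -
          (ℓ : ℝ) * ((ℓ : ℝ) - 1) * ((ℓ : ℝ) + 1) / 2| ≤
        c * ((ℓ : ℝ) * ((ℓ : ℝ) - 1) * ((ℓ : ℝ) + 1)) / (ℓ : ℝ)) ∧
      (|(Set.ncard {A : Matrix.GeneralLinearGroup (Fin 2) (ZMod ℓ) |
            Matrix.det (A : Matrix (Fin 2) (Fin 2) (ZMod ℓ)) = d ∧ A ∈ serreC2 ℓ} : ℝ) -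
          (ℓ : ℝ) * ((ℓ : ℝ) - 1) * ((ℓ : ℝ) + 1) / 2| ≤
        c * ((ℓ : ℝ) * ((ℓ : ℝ) - 1) * ((ℓ : ℝ) + 1)) / (ℓ : ℝ)) ∧
      (|(Set.ncard {A : Matrix.GeneralLinearGroup (Fin 2) (ZMod ℓ) |
            Matrix.det (A : Matrix (Fin 2) (Fin 2) (ZMod ℓ)) = d ∧ A ∈ serreC3 ℓ} : ℝ) -
          (ℓ : ℝ) * ((ℓ : ℝ) - 1) * ((ℓ : ℝ) + 1)| ≤
        c * ((ℓ : ℝ) * ((ℓ : ℝ) - 1) * ((ℓ : ℝ) + 1)) / (ℓ : ℝ)) := by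
  classical
  refine ⟨20, by norm_num, fun ℓ hp hℓ5 d hd => ?_⟩
  haveI : Fact ℓ.Prime := ⟨hp⟩
  have h2 : (2 : ZMod ℓ) ≠ 0 := by
    have h22 : ((2 : ℕ) : ZMod ℓ) = (2 : ZMod ℓ) := by push_cast; ring
    rw [← h22, Ne, ZMod.natCast_eq_zero_iff]
    intro hdvd
    have := Nat.le_of_dvd (by norm_num) hdvd
    omega
  have hcard : Fintype.card (ZMod ℓ) = ℓ := ZMod.card ℓ
  have hL5 : (5 : ℝ) ≤ (ℓ : ℝ) := by exact_mod_cast hℓ5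
  have hL0 : (ℓ : ℝ) ≠ 0 := by linarith
  have hrhs : 20 * ((ℓ : ℝ) * ((ℓ : ℝ) - 1) * ((ℓ : ℝ) + 1)) / (ℓ : ℝ)
      = 20 * ((ℓ : ℝ) * (ℓ : ℝ)) - 20 := by
    field_simp
    ring
  have hLsq : (0 : ℝ) ≤ (ℓ : ℝ) * (ℓ : ℝ) - 3 * (ℓ : ℝ) := by nlinarith
  have hLsq' : (0 : ℝ) ≤ (ℓ : ℝ) * (ℓ : ℝ) + 3 * (ℓ : ℝ) := by nlinarith
  refine ⟨?_, ?_, ?_⟩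
  · -- C₁
    obtain ⟨hNu, hNl⟩ := count1_bounds (F := ZMod ℓ) d
    obtain ⟨hTl, hTu⟩ := t1_bounds (F := ZMod ℓ) hd h2
    rw [hcard] at hNu hNl hTl hTu
    have e1 : Set.ncard {A : Matrix.GeneralLinearGroup (Fin 2) (ZMod ℓ) |
          Matrix.det (A : Matrix (Fin 2) (Fin 2) (ZMod ℓ)) = d ∧ A ∈ serreC1 ℓ}
        = (univ.filter fun M : Matrix (Fin 2) (Fin 2) (ZMod ℓ) => M.det = d ∧
            ((∃ y : ZMod ℓ, y ≠ 0 ∧ M.trace ^ 2 - 4 * M.det = y ^ 2) ∧ M.trace ≠ 0)).card :=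
      ncard_GL hd (fun M : Matrix (Fin 2) (Fin 2) (ZMod ℓ) => M.det = d ∧
        ((∃ y : ZMod ℓ, y ≠ 0 ∧ M.trace ^ 2 - 4 * M.det = y ^ 2) ∧ M.trace ≠ 0))
        (fun M hM => hM.1)
    have e2 : (univ.filter fun M : Matrix (Fin 2) (Fin 2) (ZMod ℓ) => M.det = d ∧
            ((∃ y : ZMod ℓ, y ≠ 0 ∧ M.trace ^ 2 - 4 * M.det = y ^ 2) ∧ M.trace ≠ 0)).card
        = (univ.filter fun M : Matrix (Fin 2) (Fin 2) (ZMod ℓ) => M.det = d ∧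
            ((∃ y : ZMod ℓ, y ≠ 0 ∧ M.trace ^ 2 - 4 * d = y ^ 2) ∧ M.trace ≠ 0)).card := by
      refine congrArg Finset.card (Finset.filter_congr fun M _ => ?_)
      constructor
      · rintro ⟨h1, hrest⟩; rw [h1] at hrest; exact ⟨h1, hrest⟩
      · rintro ⟨h1, hrest⟩; rw [← h1] at hrest; exact ⟨h1, hrest⟩
    rw [e1, e2, hrhs, abs_le]
    have cNu := (Nat.cast_le (α := ℝ)).mpr hNu
    have cNl := (Nat.cast_le (α := ℝ)).mpr hNl
    have cTl := (Nat.cast_le (α := ℝ)).mpr hTl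
    have cTu := (Nat.cast_le (α := ℝ)).mpr hTu
    push_cast at cNu cNl cTl cTu
    constructor
    · nlinarith [mul_nonneg (by linarith : (0:ℝ) ≤ 2 * ((univ.filter fun t : ZMod ℓ =>
          (∃ y : ZMod ℓ, y ≠ 0 ∧ t ^ 2 - 4 * d = y ^ 2) ∧ t ≠ 0).card : ℝ) + 5 - (ℓ : ℝ)) hLsq]
    · nlinarith [mul_nonneg (by linarith : (0:ℝ) ≤ (ℓ : ℝ) - 1 - 2 * ((univ.filter fun t : ZMod ℓ =>
          (∃ y : ZMod ℓ, y ≠ 0 ∧ t ^ 2 - 4 * d = y ^ 2) ∧ t ≠ 0).card : ℝ)) hLsq']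
  · -- C₂
    obtain ⟨hNu, hNl⟩ := count2_bounds (F := ZMod ℓ) d
    obtain ⟨hTl, hTu⟩ := t2_bounds (F := ZMod ℓ) hd h2
    rw [hcard] at hNu hNl hTl hTu
    have e1 : Set.ncard {A : Matrix.GeneralLinearGroup (Fin 2) (ZMod ℓ) |
          Matrix.det (A : Matrix (Fin 2) (Fin 2) (ZMod ℓ)) = d ∧ A ∈ serreC2 ℓ}
        = (univ.filter fun M : Matrix (Fin 2) (Fin 2) (ZMod ℓ) => M.det = d ∧
            ((¬ ∃ y : ZMod ℓ, M.trace ^ 2 - 4 * M.det = y ^ 2) ∧ M.trace ≠ 0)).card :=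
      ncard_GL hd (fun M : Matrix (Fin 2) (Fin 2) (ZMod ℓ) => M.det = d ∧
        ((¬ ∃ y : ZMod ℓ, M.trace ^ 2 - 4 * M.det = y ^ 2) ∧ M.trace ≠ 0))
        (fun M hM => hM.1)
    have e2 : (univ.filter fun M : Matrix (Fin 2) (Fin 2) (ZMod ℓ) => M.det = d ∧
            ((¬ ∃ y : ZMod ℓ, M.trace ^ 2 - 4 * M.det = y ^ 2) ∧ M.trace ≠ 0)).card
        = (univ.filter fun M : Matrix (Fin 2) (Fin 2) (ZMod ℓ) => M.det = d ∧
            ((¬ ∃ y : ZMod ℓ, M.trace ^ 2 - 4 * d = y ^ 2) ∧ M.trace ≠ 0)).card := by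
      refine congrArg Finset.card (Finset.filter_congr fun M _ => ?_)
      constructor
      · rintro ⟨h1, hrest⟩; rw [h1] at hrest; exact ⟨h1, hrest⟩
      · rintro ⟨h1, hrest⟩; rw [← h1] at hrest; exact ⟨h1, hrest⟩
    rw [e1, e2, hrhs, abs_le]
    have cNu := (Nat.cast_le (α := ℝ)).mpr hNu
    have cNl := (Nat.cast_le (α := ℝ)).mpr hNl
    have cTl := (Nat.cast_le (α := ℝ)).mpr hTl
    have cTu := (Nat.cast_le (α := ℝ)).mpr hTu
    push_cast at cNu cNl cTl cTu
    constructor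
    · nlinarith [mul_nonneg (by linarith : (0:ℝ) ≤ 2 * ((univ.filter fun t : ZMod ℓ =>
          (¬ ∃ y : ZMod ℓ, t ^ 2 - 4 * d = y ^ 2) ∧ t ≠ 0).card : ℝ) + 5 - (ℓ : ℝ)) hLsq]
    · nlinarith [mul_nonneg (by linarith : (0:ℝ) ≤ (ℓ : ℝ) + 3 - 2 * ((univ.filter fun t : ZMod ℓ =>
          (¬ ∃ y : ZMod ℓ, t ^ 2 - 4 * d = y ^ 2) ∧ t ≠ 0).card : ℝ)) hLsq']
  · -- C₃
    obtain ⟨hNu, hNl⟩ := count3_bounds (F := ZMod ℓ) d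
    have hTl := t3_bound (F := ZMod ℓ) hd
    have hTu : (univ.filter fun t : ZMod ℓ =>
        t ^ 2 * d⁻¹ ≠ 0 ∧ t ^ 2 * d⁻¹ ≠ 1 ∧ t ^ 2 * d⁻¹ ≠ 2 ∧ t ^ 2 * d⁻¹ ≠ 4 ∧
        (t ^ 2 * d⁻¹) ^ 2 - 3 * (t ^ 2 * d⁻¹) + 1 ≠ 0).card ≤ ℓ := by
      refine le_trans (Finset.card_filter_le _ _) ?_
      rw [Finset.card_univ, hcard]
    rw [hcard] at hNu hNl hTl
    have e1 : Set.ncard {A : Matrix.GeneralLinearGroup (Fin 2) (ZMod ℓ) |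
          Matrix.det (A : Matrix (Fin 2) (Fin 2) (ZMod ℓ)) = d ∧ A ∈ serreC3 ℓ}
        = (univ.filter fun M : Matrix (Fin 2) (Fin 2) (ZMod ℓ) => M.det = d ∧
            (M.trace ^ 2 * M.det⁻¹ ≠ 0 ∧ M.trace ^ 2 * M.det⁻¹ ≠ 1 ∧
             M.trace ^ 2 * M.det⁻¹ ≠ 2 ∧ M.trace ^ 2 * M.det⁻¹ ≠ 4 ∧
             (M.trace ^ 2 * M.det⁻¹) ^ 2 - 3 * (M.trace ^ 2 * M.det⁻¹) + 1 ≠ 0)).card :=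
      ncard_GL hd (fun M : Matrix (Fin 2) (Fin 2) (ZMod ℓ) => M.det = d ∧
        (M.trace ^ 2 * M.det⁻¹ ≠ 0 ∧ M.trace ^ 2 * M.det⁻¹ ≠ 1 ∧
         M.trace ^ 2 * M.det⁻¹ ≠ 2 ∧ M.trace ^ 2 * M.det⁻¹ ≠ 4 ∧
         (M.trace ^ 2 * M.det⁻¹) ^ 2 - 3 * (M.trace ^ 2 * M.det⁻¹) + 1 ≠ 0))
        (fun M hM => hM.1)
    have e2 : (univ.filter fun M : Matrix (Fin 2) (Fin 2) (ZMod ℓ) => M.det = d ∧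
            (M.trace ^ 2 * M.det⁻¹ ≠ 0 ∧ M.trace ^ 2 * M.det⁻¹ ≠ 1 ∧
             M.trace ^ 2 * M.det⁻¹ ≠ 2 ∧ M.trace ^ 2 * M.det⁻¹ ≠ 4 ∧
             (M.trace ^ 2 * M.det⁻¹) ^ 2 - 3 * (M.trace ^ 2 * M.det⁻¹) + 1 ≠ 0)).card
        = (univ.filter fun M : Matrix (Fin 2) (Fin 2) (ZMod ℓ) => M.det = d ∧
            (M.trace ^ 2 * d⁻¹ ≠ 0 ∧ M.trace ^ 2 * d⁻¹ ≠ 1 ∧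
             M.trace ^ 2 * d⁻¹ ≠ 2 ∧ M.trace ^ 2 * d⁻¹ ≠ 4 ∧
             (M.trace ^ 2 * d⁻¹) ^ 2 - 3 * (M.trace ^ 2 * d⁻¹) + 1 ≠ 0)).card := by
      refine congrArg Finset.card (Finset.filter_congr fun M _ => ?_)
      constructor
      · rintro ⟨h1, hrest⟩; rw [h1] at hrest; exact ⟨h1, hrest⟩
      · rintro ⟨h1, hrest⟩; rw [← h1] at hrest; exact ⟨h1, hrest⟩
    rw [e1, e2, hrhs, abs_le]
    have cNu := (Nat.cast_le (α := ℝ)).mpr hNu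
    have cNl := (Nat.cast_le (α := ℝ)).mpr hNl
    have cTl := (Nat.cast_le (α := ℝ)).mpr hTl
    have cTu := (Nat.cast_le (α := ℝ)).mpr hTu
    push_cast at cNu cNl cTl cTu
    constructor
    · nlinarith [mul_nonneg (by linarith : (0:ℝ) ≤ ((univ.filter fun t : ZMod ℓ =>
          t ^ 2 * d⁻¹ ≠ 0 ∧ t ^ 2 * d⁻¹ ≠ 1 ∧ t ^ 2 * d⁻¹ ≠ 2 ∧ t ^ 2 * d⁻¹ ≠ 4 ∧
          (t ^ 2 * d⁻¹) ^ 2 - 3 * (t ^ 2 * d⁻¹) + 1 ≠ 0).card : ℝ) + 12 - (ℓ : ℝ)) hLsq]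
    · nlinarith [mul_nonneg (by linarith : (0:ℝ) ≤ (ℓ : ℝ) - ((univ.filter fun t : ZMod ℓ =>
          t ^ 2 * d⁻¹ ≠ 0 ∧ t ^ 2 * d⁻¹ ≠ 1 ∧ t ^ 2 * d⁻¹ ≠ 2 ∧ t ^ 2 * d⁻¹ ≠ 4 ∧
          (t ^ 2 * d⁻¹) ^ 2 - 3 * (t ^ 2 * d⁻¹) + 1 ≠ 0).card : ℝ)) hLsq']
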